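/- Let k be a field of characteristic p with [k : k^p] = p^e (set e = 0 in characteristic 0 for separable extensions; in general e+1 generators suffice). Let S be a k-algebra generated by m elements, and M a maximal ideal of S with dim_k(S/M) < ∞. Then M is generated by at most m + e + 1 elements. -/

import Mathlib

open Polynomial

universe u v

set_option maxHeartbeats 1000000 in
set_option synthInstance.maxHeartbeats 400000 in
/-- Auxiliary: a maximal ideal with finite-dimensional residue field in a
`k`-algebra generated by `n` elements is generated by at most `n + 1` elements. -/
lemma aux_gen {k : Type v} [Field k] :
    ∀ (n : ℕ) (S : Type u) [CommRing S] [Algebra k S]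
      (G : Finset S), G.card ≤ n → Algebra.adjoin k (G : Set S) = ⊤ →
      ∀ (M : Ideal S), M.IsMaximal → FiniteDimensional k (S ⧸ M) →
      ∃ T : Finset S, Ideal.span (T : Set S) = M ∧ T.card ≤ n + 1 := by
  intro n
  induction n with
  | zero =>
    intro S _ _ G hcard hG M hM hfin
    refine ⟨∅, ?_, by simp⟩
    have hGe : G = ∅ := Finset.card_eq_zero.mp (Nat.le_zero.mp hcard)
    subst hGe
    simp only [Finset.coe_empty, Algebra.adjoin_empty] at hG
    have hM0 : M = ⊥ := by
      refine le_antisymm ?_ bot_le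
      intro x hx
      have hxb : x ∈ (⊥ : Subalgebra k S) := hG ▸ Algebra.mem_top
      obtain ⟨c, rfl⟩ := Algebra.mem_bot.mp hxb
      rcases eq_or_ne c 0 with rfl | hc
      · simp
      · exact absurd (M.eq_top_of_isUnit_mem hx ((isUnit_iff_ne_zero.mpr hc).map (algebraMap k S)))
          hM.ne_top
    rw [hM0, Ideal.span_eq_bot]
    simp
  | succ n ih =>
    intro S _ _ G hcard hG M hM hfin
    classical
    by_cases hle : G.card ≤ n
    · obtain ⟨T, h1, h2⟩ := ih S G hle hG M hM hfin
      exact ⟨T, h1, h2.trans (Nat.le_succ _)⟩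
    have hpos : 0 < G.card := by omega
    obtain ⟨g, hg⟩ := Finset.card_pos.mp hpos
    set G' : Finset S := G.erase g with hG'def
    have hcard' : G'.card ≤ n := by
      rw [hG'def, Finset.card_erase_of_mem hg]
      omega
    set S' : Subalgebra k S := Algebra.adjoin k (G' : Set S) with hS'def
    -- generating finset of S'
    have hf_inj : Function.Injective
        (fun x : {x // x ∈ G'} => (⟨x.1, Algebra.subset_adjoin x.2⟩ : S')) := by
      intro a b hab
      simp only [Subtype.mk.injEq] at hab
      exact Subtype.ext hab
    set G'' : Finset S' := G'.attach.map ⟨_, hf_inj⟩ with hG''def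
    have hG''card : G''.card ≤ n := by
      simpa [hG''def] using hcard'
    have hG''set : (G'' : Set S') = ((↑) : S' → S) ⁻¹' (G' : Set S) := by
      ext x
      simp only [hG''def, Finset.mem_coe, Set.mem_preimage, Finset.mem_map,
        Finset.mem_attach, Function.Embedding.coeFn_mk, true_and]
      constructor
      · rintro ⟨a, rfl⟩; exact a.2
      · intro hx; exact ⟨⟨(x : S), hx⟩, Subtype.ext rfl⟩
    have hG''top : Algebra.adjoin k (G'' : Set S') = ⊤ := by
      rw [hG''set]; exact Algebra.adjoin_adjoin_coe_preimage
    -- the ideal M' of S'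
    set M' : Ideal S' := M.comap (algebraMap S' S) with hM'def
    haveI hM'prime : M'.IsPrime := Ideal.IsPrime.comap _
    set ι : ↥S' ⧸ M' →+* S ⧸ M := Ideal.quotientMap M (algebraMap S' S) le_rfl with hιdef
    have hι_inj : Function.Injective ι := Ideal.quotientMap_injective' le_rfl
    have hι_alg : ∀ c : k, ι (algebraMap k (↥S' ⧸ M') c) = algebraMap k (S ⧸ M) c := by
      intro c
      rw [IsScalarTower.algebraMap_apply k (↥S') (↥S' ⧸ M'), Ideal.Quotient.algebraMap_eq,
        hιdef, Ideal.quotientMap_mk, ← IsScalarTower.algebraMap_apply k (↥S') S,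
        IsScalarTower.algebraMap_apply k S (S ⧸ M), Ideal.Quotient.algebraMap_eq]
    letI ℓ : (↥S' ⧸ M') →ₗ[k] (S ⧸ M) :=
      { toFun := ι
        map_add' := ι.map_add
        map_smul' := by
          intro c x
          obtain ⟨y, rfl⟩ := Ideal.Quotient.mk_surjective x
          show ι (c • Ideal.Quotient.mk M' y) = c • ι (Ideal.Quotient.mk M' y)
          have h1 : c • Ideal.Quotient.mk M' y = Ideal.Quotient.mk M' (c • y) := by
            rw [← Ideal.Quotient.mkₐ_eq_mk k M', ← map_smul]
          have h3 : Ideal.Quotient.mk M (c • algebraMap (↥S') S y) =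
              c • Ideal.Quotient.mk M (algebraMap (↥S') S y) := by
            rw [← Ideal.Quotient.mkₐ_eq_mk k M, map_smul]
          have h2 : algebraMap (↥S') S (c • y) = c • (algebraMap (↥S') S y) := by
            rw [Algebra.smul_def, Algebra.smul_def, map_mul,
              ← IsScalarTower.algebraMap_apply k (↥S') S]
          rw [h1, hιdef, Ideal.quotientMap_mk, h2, h3, Ideal.quotientMap_mk] }
    haveI hfin' : FiniteDimensional k (↥S' ⧸ M') :=
      FiniteDimensional.of_injective ℓ hι_inj
    have hfield : IsField (↥S' ⧸ M') := by
      haveI : Algebra.IsIntegral k (↥S' ⧸ M') := Algebra.IsIntegral.of_finite _ _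
      exact isField_of_isIntegral_of_isField' (Field.toIsField k)
    haveI hM'max : M'.IsMaximal := Ideal.Quotient.maximal_of_isField _ hfield
    -- apply the induction hypothesis
    obtain ⟨T', hT'span, hT'card⟩ := ih S' G'' hG''card hG''top M' hM'max hfin'
    -- S is generated over S' by g
    have hadj : Algebra.adjoin S' ({g} : Set S) = ⊤ := by
      have hins : (G : Set S) = (G' : Set S) ∪ {g} := by
        ext x
        simp only [Set.mem_union, Set.mem_singleton_iff, Finset.mem_coe, hG'def,
          Finset.mem_erase]
        constructor
        · intro hx
          rcases eq_or_ne x g with rfl | hne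
          · exact Or.inr rfl
          · exact Or.inl ⟨hne, hx⟩
        · rintro (⟨_, hx⟩ | rfl) <;> [exact hx; exact hg]
      rw [hins, Algebra.adjoin_union_eq_adjoin_adjoin] at hG
      exact Subalgebra.restrictScalars_injective k
        (by rw [hG]; ext x; simp [Algebra.mem_top, Subalgebra.mem_restrictScalars])
    have hφsurj : Function.Surjective (Polynomial.aeval (R := S') g : S'[X] →ₐ[S'] S) := by
      rw [← AlgHom.range_eq_top, ← Algebra.adjoin_singleton_eq_range_aeval]
      exact hadj
    -- the residue field of M' and the evaluation map θ
    letI : Field (↥S' ⧸ M') := hfield.toField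
    set θ : (↥S' ⧸ M')[X] →+* S ⧸ M :=
      Polynomial.eval₂RingHom ι (Ideal.Quotient.mk M g) with hθdef
    have key : ∀ q : S'[X], θ (q.map (Ideal.Quotient.mk M')) =
        Ideal.Quotient.mk M (Polynomial.aeval g q) := by
      intro q
      rw [hθdef, Polynomial.coe_eval₂RingHom, Polynomial.eval₂_map, Polynomial.aeval_def,
        Polynomial.hom_eval₂, Ideal.quotientMap_comp_mk]
    -- generator of the kernel of θ
    set p0 : (↥S' ⧸ M')[X] := Submodule.IsPrincipal.generator (RingHom.ker θ) with hp0def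
    have hker : Ideal.span {p0} = RingHom.ker θ := Ideal.span_singleton_generator _
    obtain ⟨p, hp⟩ := Polynomial.map_surjective _ Ideal.Quotient.mk_surjective p0
    set f : S := Polynomial.aeval g p with hfdef
    have hfM : f ∈ M := by
      rw [← Ideal.Quotient.eq_zero_iff_mem, hfdef, ← key, hp]
      exact Submodule.IsPrincipal.generator_mem (RingHom.ker θ)
    -- the generating finset of M
    set T : Finset S := T'.image (fun x : S' => (algebraMap S' S x)) ∪ {f} with hTdef
    refine ⟨T, ?_, ?_⟩
    · apply le_antisymm
      · rw [Ideal.span_le]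
        intro x hx
        simp only [hTdef, Finset.coe_union, Set.mem_union, Finset.coe_image, Set.mem_image,
          Finset.coe_singleton, Set.mem_singleton_iff, Finset.mem_coe] at hx
        rcases hx with ⟨y, hy, rfl⟩ | rfl
        · have : y ∈ M' := by rw [← hT'span]; exact Ideal.subset_span hy
          exact this
        · exact hfM
      · intro x hx
        obtain ⟨q, rfl⟩ := hφsurj x
        have hq : q.map (Ideal.Quotient.mk M') ∈ Ideal.span {p0} := by
          rw [hker, RingHom.mem_ker, key, Ideal.Quotient.eq_zero_iff_mem]
          exact hx
        obtain ⟨r0, hr0⟩ := Ideal.mem_span_singleton'.mp hq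
        obtain ⟨r, hr⟩ := Polynomial.map_surjective _ Ideal.Quotient.mk_surjective r0
        have hd : (q - r * p).map (Ideal.Quotient.mk M') = 0 := by
          rw [Polynomial.map_sub, Polynomial.map_mul, hr, hp, hr0, sub_self]
        have hdmem : (q - r * p) ∈ M'.map (Polynomial.C : S' →+* S'[X]) := by
          rw [← Ideal.mk_ker (I := M'), ← Polynomial.ker_mapRingHom]
          simpa [RingHom.mem_ker] using hd
        have hmap : Ideal.map ((Polynomial.aeval (R := S') g : S'[X] →ₐ[S'] S) :
              S'[X] →+* S) (M'.map (Polynomial.C : S' →+* S'[X])) =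
            M'.map (algebraMap S' S) := by
          rw [Ideal.map_map]
          congr 1
          ext a
          simp
        have had : Polynomial.aeval g (q - r * p) ∈ M'.map (algebraMap S' S) := by
          rw [← hmap]
          exact Ideal.mem_map_of_mem _ hdmem
        have hsub : M'.map (algebraMap S' S) ≤ Ideal.span (T : Set S) := by
          rw [← hT'span, Ideal.map_span, Ideal.span_le]
          intro a ha
          apply Ideal.subset_span
          obtain ⟨y, hy, rfl⟩ := ha
          simp only [hTdef, Finset.coe_union, Set.mem_union, Finset.coe_image, Set.mem_image,
            Finset.mem_coe]
          exact Or.inl ⟨y, hy, rfl⟩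
        have hfT : f ∈ Ideal.span (T : Set S) := by
          apply Ideal.subset_span
          simp [hTdef]
        have : (Polynomial.aeval g q : S) =
            Polynomial.aeval g (q - r * p) + Polynomial.aeval g r * f := by
          rw [hfdef, ← map_mul, ← map_add, sub_add_cancel]
        rw [this]
        exact add_mem (hsub had) (Ideal.mul_mem_left _ _ hfT)
    · calc T.card ≤ (T'.image (fun x : S' => (algebraMap S' S x))).card + 1 := by
            simpa [hTdef] using Finset.card_union_le (T'.image (fun x : S' => (algebraMap S' S x))) {f}
        _ ≤ T'.card + 1 := by gcongr; exact Finset.card_image_le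
        _ ≤ (n + 1) + 1 := by omega

theorem stmt_15 {k : Type*} [Field k] (e m : ℕ)
    (he : (∃ p : ℕ, p.Prime ∧ CharP k p ∧ ∃ b : Fin (p ^ e) → k,
        (∀ x : k, ∃ c : Fin (p ^ e) → k, x = ∑ i, c i ^ p * b i) ∧
        (∀ c : Fin (p ^ e) → k, ∑ i, c i ^ p * b i = 0 → ∀ i, c i = 0)) ∨
      (CharP k 0 ∧ e = 1))
    {S : Type*} [CommRing S] [Algebra k S]
    (G : Finset S) (hG : Algebra.adjoin k (G : Set S) = ⊤) (hm : G.card = m)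
    (M : Ideal S) [M.IsMaximal] (hfin : FiniteDimensional k (S ⧸ M)) :
    ∃ T : Finset S, Ideal.span (T : Set S) = M ∧ T.card ≤ m + e + 1 := by
  obtain ⟨T, h1, h2⟩ := aux_gen m S G hm.le hG M ‹_› hfin
  exact ⟨T, h1, by omega⟩
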